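/- The function Ĥ is continuous on [0, +∞), differentiable on (0, +∞), and twice differentiable on (0, ψ(b*)) ∪ (ψ(b*), +∞); Ĥ(0) = 0; Ĥ is strictly decreasing on [ψ(b*), +∞); and if sup_{x∈ℝ} ĥ(x) > 0, then there exists b̲ < b* such that Ĥ(z) < 0 for all z ∈ (0, ψ(b̲)) ∪ [ψ(b*), +∞). -/

import Mathlib

open Real MeasureTheory Set Filter

noncomputable def Jf (s y : ℝ) : ℝ :=
  ∫ u in Ioi (0:ℝ), u ^ s * Real.exp (y * u - u ^ 2 / 2)

lemma J_bound {s y : ℝ} (u : ℝ) (hu : 0 < u) :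
    u ^ s * Real.exp (y * u - u ^ 2 / 2) ≤
      Real.exp (y ^ 2) * (u ^ s * Real.exp (-(1/4) * u ^ 2)) := by
  have h1 : y * u - u ^ 2 / 2 ≤ y ^ 2 + (-(1/4) * u ^ 2) := by nlinarith [sq_nonneg (y - u/2), sq_nonneg u]
  have h2 : Real.exp (y * u - u ^ 2 / 2) ≤ Real.exp (y ^ 2) * Real.exp (-(1/4) * u ^ 2) := by
    rw [← Real.exp_add]; exact Real.exp_le_exp.mpr h1
  have hp : (0:ℝ) ≤ u ^ s := (Real.rpow_pos_of_pos hu s).le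
  calc u ^ s * Real.exp (y * u - u ^ 2 / 2)
      ≤ u ^ s * (Real.exp (y ^ 2) * Real.exp (-(1/4) * u ^ 2)) := by
        exact mul_le_mul_of_nonneg_left h2 hp
    _ = Real.exp (y ^ 2) * (u ^ s * Real.exp (-(1/4) * u ^ 2)) := by ring

lemma J_meas (s y : ℝ) :
    AEStronglyMeasurable (fun u : ℝ => u ^ s * Real.exp (y * u - u ^ 2 / 2))
      (volume.restrict (Ioi (0:ℝ))) := by
  apply Measurable.aestronglyMeasurable
  exact (Measurable.pow measurable_id measurable_const).mul
    ((measurable_const.mul measurable_id).sub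
      ((measurable_id.pow measurable_const).div measurable_const)).exp

lemma J_integrable {s : ℝ} (hs : -1 < s) (y : ℝ) :
    IntegrableOn (fun u : ℝ => u ^ s * Real.exp (y * u - u ^ 2 / 2)) (Ioi 0) := by
  have hbase : IntegrableOn (fun u : ℝ => Real.exp (y ^ 2) * (u ^ s * Real.exp (-(1/4) * u ^ 2)))
      (Ioi (0:ℝ)) :=
    (integrableOn_rpow_mul_exp_neg_mul_sq (by norm_num) hs).const_mul _
  refine Integrable.mono' hbase (J_meas s y) ?_
  filter_upwards [ae_restrict_mem measurableSet_Ioi] with u hu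
  have hu' : (0:ℝ) < u := hu
  rw [Real.norm_eq_abs, abs_of_nonneg (by positivity)]
  exact J_bound u hu'

lemma J_pos {s : ℝ} (hs : -1 < s) (y : ℝ) : 0 < Jf s y := by
  rw [Jf]
  apply setIntegral_pos_iff_support_of_nonneg_ae ?_ (J_integrable hs y) |>.mpr
  · have : (Function.support fun u : ℝ => u ^ s * Real.exp (y * u - u ^ 2 / 2)) ∩ Ioi 0 = Ioi 0 := by
      apply inter_eq_right.mpr
      intro u hu
      have hu' : (0:ℝ) < u := hu
      simp only [Function.mem_support]
      positivity
    rw [this]; simp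
  · filter_upwards [ae_restrict_mem measurableSet_Ioi] with u hu
    have hu' : (0:ℝ) < u := hu
    positivity

lemma J_hasDerivAt {s : ℝ} (hs : -1 < s) (y : ℝ) :
    HasDerivAt (fun y => Jf s y) (Jf (s+1) y) y := by
  have key := hasDerivAt_integral_of_dominated_loc_of_deriv_le (F := fun y (u:ℝ) =>
      u ^ s * Real.exp (y * u - u ^ 2 / 2))
      (F' := fun y (u:ℝ) => u ^ (s+1) * Real.exp (y * u - u ^ 2 / 2))
      (μ := volume.restrict (Ioi (0:ℝ))) (x₀ := y)
      (bound := fun u => u ^ (s+1) * Real.exp ((|y|+1) * u - u ^ 2 / 2))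
      (Metric.ball_mem_nhds y one_pos) (Eventually.of_forall fun x => J_meas s x) (J_integrable hs y)
      (J_meas (s+1) y) ?_ (J_integrable (by linarith) (|y|+1)) ?_
  · have h2 : (∫ u in Ioi (0:ℝ), u ^ (s+1) * Real.exp (y * u - u ^ 2 / 2)) = Jf (s+1) y := rfl
    exact key.2
  · filter_upwards [ae_restrict_mem measurableSet_Ioi] with u hu x hx
    have hu' : (0:ℝ) < u := hu
    rw [Real.norm_eq_abs, abs_of_nonneg (by positivity)]
    have hx' : |x - y| < 1 := by simpa [Real.dist_eq] using Metric.mem_ball.mp hx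
    have : x * u ≤ (|y|+1) * u := by
      apply mul_le_mul_of_nonneg_right _ (le_of_lt hu')
      have h1 := (abs_lt.mp hx').2
      linarith [le_abs_self y]
    exact mul_le_mul_of_nonneg_left (Real.exp_le_exp.mpr (by linarith)) (by positivity)
  · filter_upwards [ae_restrict_mem measurableSet_Ioi] with u hu x _
    have hu' : (0:ℝ) < u := hu
    have h1 : HasDerivAt (fun x : ℝ => x * u - u ^ 2 / 2) u x := by
      simpa using (hasDerivAt_mul_const u).sub_const (u ^ 2 / 2)
    have h2 := (h1.exp).const_mul (u ^ s)
    exact h2.congr_deriv (by rw [Real.rpow_add hu', Real.rpow_one]; ring)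

lemma J_strictMono {s : ℝ} (hs : -1 < s) : StrictMono (fun y => Jf s y) :=
  strictMono_of_hasDerivAt_pos (fun y => J_hasDerivAt hs y)
    (fun y => J_pos (by linarith) y)

lemma J_tendsto_atBot {s : ℝ} (hs : -1 < s) :
    Tendsto (fun y => Jf s y) atBot (nhds 0) := by
  have key : Tendsto (fun y => Jf s y) atBot
      (nhds (∫ _u in Ioi (0:ℝ), (0:ℝ))) := by
    apply tendsto_integral_filter_of_dominated_convergence
      (bound := fun u : ℝ => u ^ s * Real.exp (0 * u - u ^ 2 / 2))
    · exact Eventually.of_forall fun y => J_meas s y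
    · filter_upwards [eventually_le_atBot (0:ℝ)] with y hy
      filter_upwards [ae_restrict_mem measurableSet_Ioi] with u hu
      have hu' : (0:ℝ) < u := hu
      rw [Real.norm_eq_abs, abs_of_nonneg (by positivity)]
      apply mul_le_mul_of_nonneg_left (Real.exp_le_exp.mpr ?_) (by positivity)
      nlinarith
    · exact J_integrable hs 0
    · filter_upwards [ae_restrict_mem measurableSet_Ioi] with u hu
      have hu' : (0:ℝ) < u := hu
      have h1 : Tendsto (fun y : ℝ => y * u - u ^ 2 / 2) atBot atBot := by
        apply Tendsto.atBot_add _ tendsto_const_nhds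
        exact tendsto_id.atBot_mul_const hu'
      have h2 : Tendsto (fun y : ℝ => Real.exp (y * u - u ^ 2 / 2)) atBot (nhds 0) :=
        Real.tendsto_exp_atBot.comp h1
      simpa using h2.const_mul (u ^ s)
  simpa using key

lemma J_tendsto_atTop {s : ℝ} (hs : -1 < s) :
    Tendsto (fun y => Jf s y) atTop atTop := by
  set c : ℝ := ∫ u in Ioc (1:ℝ) 2, u ^ s * Real.exp (0 * u - u ^ 2 / 2) with hc
  have hsub : Ioc (1:ℝ) 2 ⊆ Ioi 0 := fun u hu => lt_of_lt_of_le one_pos hu.1.le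
  have hcpos : 0 < c := by
    rw [hc]
    apply setIntegral_pos_iff_support_of_nonneg_ae ?_ ?_ |>.mpr
    · have hss : (Function.support fun u : ℝ => u ^ s * Real.exp (0 * u - u ^ 2 / 2)) ∩ Ioc 1 2
          = Ioc 1 2 := by
        apply inter_eq_right.mpr
        intro u hu
        have hu' : (0:ℝ) < u := hsub hu
        simp only [Function.mem_support]
        positivity
      rw [hss]; simp
    · filter_upwards [ae_restrict_mem measurableSet_Ioc] with u hu
      have hu' : (0:ℝ) < u := hsub hu
      positivity
    · exact (J_integrable hs 0).mono_set hsub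
  have hbound : ∀ y : ℝ, 0 ≤ y → Real.exp y * c ≤ Jf s y := by
    intro y hy
    have step1 : Real.exp y * c ≤ ∫ u in Ioc (1:ℝ) 2, u ^ s * Real.exp (y * u - u ^ 2 / 2) := by
      rw [hc, ← integral_const_mul]
      apply setIntegral_mono_on
      · exact (((J_integrable hs 0).mono_set hsub).const_mul _)
      · exact (J_integrable hs y).mono_set hsub
      · exact measurableSet_Ioc
      · intro u hu
        have hu' : (0:ℝ) < u := hsub hu
        have h1 : y + (0 * u - u ^ 2 / 2) ≤ y * u - u ^ 2 / 2 := by nlinarith [hu.1]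
        calc Real.exp y * (u ^ s * Real.exp (0 * u - u ^ 2 / 2))
            = u ^ s * Real.exp (y + (0 * u - u ^ 2 / 2)) := by rw [Real.exp_add]; ring
          _ ≤ u ^ s * Real.exp (y * u - u ^ 2 / 2) :=
              mul_le_mul_of_nonneg_left (Real.exp_le_exp.mpr h1) (by positivity)
    have step2 : (∫ u in Ioc (1:ℝ) 2, u ^ s * Real.exp (y * u - u ^ 2 / 2)) ≤ Jf s y := by
      rw [Jf]
      apply setIntegral_mono_set (J_integrable hs y)
      · filter_upwards [ae_restrict_mem measurableSet_Ioi] with u hu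
        have hu' : (0:ℝ) < u := hu
        positivity
      · exact HasSubset.Subset.eventuallyLE hsub
    linarith
  apply tendsto_atTop_mono' _ _ (Tendsto.atTop_mul_const hcpos Real.tendsto_exp_atTop)
  filter_upwards [eventually_ge_atTop (0:ℝ)] with y hy
  calc Real.exp y * c ≤ Jf s y := hbound y hy

lemma FJ_hasDerivAt {s : ℝ} (hs : -1 < s) (k θ x : ℝ) :
    HasDerivAt (fun x => Jf s (k * (x - θ))) (k * Jf (s+1) (k * (x - θ))) x := by
  have hinner : HasDerivAt (fun x : ℝ => k * (x - θ)) k x := by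
    simpa using ((hasDerivAt_id x).sub_const θ).const_mul k
  have := (J_hasDerivAt hs (k * (x - θ))).comp x hinner
  simpa [Function.comp_def, mul_comm] using this

lemma GJ_hasDerivAt {s : ℝ} (hs : -1 < s) (k θ x : ℝ) :
    HasDerivAt (fun x => Jf s (k * (θ - x))) (-(k * Jf (s+1) (k * (θ - x)))) x := by
  have hinner : HasDerivAt (fun x : ℝ => k * (θ - x)) (-k) x := by
    simpa using ((hasDerivAt_id x).const_sub θ).const_mul k
  have := (J_hasDerivAt hs (k * (θ - x))).comp x hinner
  exact this.congr_deriv (by ring)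

theorem stmt14
    (μ σ θ r c_s c_b : ℝ)
    (hμ : 0 < μ) (hσ : 0 < σ) (hr : 0 < r) (hcs : 0 < c_s) (hcb : 0 < c_b)
    (F G : ℝ → ℝ)
    (hF : ∀ x : ℝ, F x = ∫ u in Ioi (0:ℝ),
        u ^ (r / μ - 1) * Real.exp (Real.sqrt (2 * μ / σ ^ 2) * (x - θ) * u - u ^ 2 / 2))
    (hG : ∀ x : ℝ, G x = ∫ u in Ioi (0:ℝ),
        u ^ (r / μ - 1) * Real.exp (Real.sqrt (2 * μ / σ ^ 2) * (θ - x) * u - u ^ 2 / 2))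
    (ψ : ℝ → ℝ) (hψ : ∀ x, ψ x = F x / G x)
    (ψinv : ℝ → ℝ)
    (hinv_left : ∀ x : ℝ, ψinv (ψ x) = x)
    (hinv_right : ∀ z : ℝ, 0 < z → ψ (ψinv z) = z)
    (bstar : ℝ)
    (hb : Real.exp bstar * F bstar = (Real.exp bstar - c_s) * deriv F bstar)
    (hb_uniq : ∀ b', Real.exp b' * F b' = (Real.exp b' - c_s) * deriv F b' → b' = bstar)
    (V : ℝ → ℝ)
    (hV1 : ∀ x : ℝ, x < bstar → V x = (Real.exp bstar - c_s) / F bstar * F x)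
    (hV2 : ∀ x : ℝ, bstar ≤ x → V x = Real.exp x - c_s)
    (hhat : ℝ → ℝ)
    (hhat_def : ∀ x : ℝ, hhat x = V x - Real.exp x - c_b)
    (Hhat : ℝ → ℝ)
    (hHhat : ∀ z : ℝ, 0 < z → Hhat z = hhat (ψinv z) / G (ψinv z))
    (hHhat0 : Hhat 0 = 0) :
    ContinuousOn Hhat (Ici (0:ℝ)) ∧
    (∀ z : ℝ, 0 < z → DifferentiableAt ℝ Hhat z) ∧
    (∀ z : ℝ, 0 < z → z ≠ ψ bstar → DifferentiableAt ℝ (deriv Hhat) z) ∧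
    Hhat 0 = 0 ∧
    StrictAntiOn Hhat (Ici (ψ bstar)) ∧
    ((∃ x, 0 < hhat x) →
      ∃ bb : ℝ, bb < bstar ∧
        ∀ z : ℝ, ((0 < z ∧ z < ψ bb) ∨ ψ bstar ≤ z) → Hhat z < 0) := by
  -- ## setup
  have hk0 : (0:ℝ) < 2 * μ / σ ^ 2 := by positivity
  set k := Real.sqrt (2 * μ / σ ^ 2) with hkdef
  have hk : 0 < k := Real.sqrt_pos.mpr hk0
  set s := r / μ - 1 with hsdef
  have hs : -1 < s := by
    have h1 : 0 < r / μ := div_pos hr hμ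
    rw [hsdef]; linarith
  have hs1 : -1 < s + 1 := by linarith
  have hFJ : ∀ x, F x = Jf s (k * (x - θ)) := by
    intro x; rw [hF x]; simp only [Jf]
  have hGJ : ∀ x, G x = Jf s (k * (θ - x)) := by
    intro x; rw [hG x]; simp only [Jf]
  have hFpos : ∀ x, 0 < F x := fun x => by rw [hFJ]; exact J_pos hs _
  have hGpos : ∀ x, 0 < G x := fun x => by rw [hGJ]; exact J_pos hs _
  have hGne : ∀ x, G x ≠ 0 := fun x => (hGpos x).ne'
  -- derivatives of F and G
  set Fd : ℝ → ℝ := fun x => k * Jf (s+1) (k * (x - θ)) with hFddef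
  set Gd : ℝ → ℝ := fun x => -(k * Jf (s+1) (k * (θ - x))) with hGddef
  have hFfun : F = fun x => Jf s (k * (x - θ)) := funext hFJ
  have hGfun : G = fun x => Jf s (k * (θ - x)) := funext hGJ
  have hFd : ∀ x, HasDerivAt F (Fd x) x := by
    intro x; rw [hFfun]; exact FJ_hasDerivAt hs k θ x
  have hGd : ∀ x, HasDerivAt G (Gd x) x := by
    intro x; rw [hGfun]; exact GJ_hasDerivAt hs k θ x
  have hFdpos : ∀ x, 0 < Fd x := fun x => mul_pos hk (J_pos hs1 _)
  have hGdneg : ∀ x, Gd x < 0 := fun x => neg_neg_iff_pos.mpr (mul_pos hk (J_pos hs1 _))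
  have hFd_diff : ∀ x, DifferentiableAt ℝ Fd x := by
    intro x
    exact ((FJ_hasDerivAt hs1 k θ x).const_mul k).differentiableAt
  have hGd_diff : ∀ x, DifferentiableAt ℝ Gd x := by
    intro x
    exact (((GJ_hasDerivAt hs1 k θ x).const_mul k).differentiableAt).neg
  -- ψ facts
  have hψfun : ψ = fun x => F x / G x := funext hψ
  set ψd : ℝ → ℝ := fun x => (Fd x * G x - F x * Gd x) / (G x) ^ 2 with hψddef
  have hψd : ∀ x, HasDerivAt ψ (ψd x) x := by
    intro x; rw [hψfun]; exact (hFd x).div (hGd x) (hGne x)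
  have hψdpos : ∀ x, 0 < ψd x := by
    intro x
    apply div_pos _ (by have := hGpos x; positivity)
    have h1 := hFdpos x; have h2 := hGdneg x; have h3 := hFpos x; have h4 := hGpos x
    nlinarith
  have hψd_diff : ∀ x, DifferentiableAt ℝ ψd x := by
    intro x
    apply DifferentiableAt.div
    · exact ((hFd_diff x).mul (hGd x).differentiableAt).sub
        ((hFd x).differentiableAt.mul (hGd_diff x))
    · exact (hGd x).differentiableAt.pow 2
    · exact pow_ne_zero 2 (hGne x)
  have hψmono : StrictMono ψ := strictMono_of_hasDerivAt_pos hψd hψdpos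
  have hψpos : ∀ x, 0 < ψ x := fun x => by rw [hψ]; exact div_pos (hFpos x) (hGpos x)
  -- inverse function facts
  have hinvlt : ∀ z x, 0 < z → (z < ψ x ↔ ψinv z < x) := by
    intro z x hz
    constructor
    · intro h
      by_contra hle
      push_neg at hle
      have h2 : ψ x ≤ ψ (ψinv z) := hψmono.le_iff_le.mpr hle
      rw [hinv_right z hz] at h2; linarith
    · intro h
      have h2 := hψmono h
      rwa [hinv_right z hz] at h2
  have hinvlt' : ∀ z x, 0 < z → (ψ x < z ↔ x < ψinv z) := by
    intro z x hz
    constructor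
    · intro h
      by_contra hle
      push_neg at hle
      have h2 : ψ (ψinv z) ≤ ψ x := hψmono.le_iff_le.mpr hle
      rw [hinv_right z hz] at h2; linarith
    · intro h
      have h2 := hψmono h
      rwa [hinv_right z hz] at h2
  have hinvle : ∀ z x, 0 < z → (ψ x ≤ z ↔ x ≤ ψinv z) := by
    intro z x hz
    rw [← not_lt, ← not_lt, not_iff_not]
    exact hinvlt z x hz
  have hψinv_cont : ∀ z, 0 < z → ContinuousAt ψinv z := by
    intro z hz
    rw [Metric.continuousAt_iff]
    intro ε hε
    set x₀ := ψinv z with hx₀def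
    have hx₀ : ψ x₀ = z := hinv_right z hz
    refine ⟨min (z - ψ (x₀ - ε/2)) (ψ (x₀ + ε/2) - z), lt_min ?_ ?_, ?_⟩
    · have h1 : ψ (x₀ - ε/2) < ψ x₀ := hψmono (by linarith)
      linarith
    · have h1 : ψ x₀ < ψ (x₀ + ε/2) := hψmono (by linarith)
      linarith
    · intro z' hz'
      rw [Real.dist_eq] at hz' ⊢
      have hd1 := (abs_lt.mp hz').1
      have hd2 := (abs_lt.mp hz').2
      have hm1 := min_le_left (z - ψ (x₀ - ε/2)) (ψ (x₀ + ε/2) - z)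
      have hm2 := min_le_right (z - ψ (x₀ - ε/2)) (ψ (x₀ + ε/2) - z)
      have h1 : ψ (x₀ - ε/2) < z' := by linarith
      have h2 : z' < ψ (x₀ + ε/2) := by linarith
      have hz'pos : 0 < z' := lt_trans (hψpos _) h1
      have ha : x₀ - ε/2 < ψinv z' := (hinvlt' z' _ hz'pos).mp h1
      have hb' : ψinv z' < x₀ + ε/2 := (hinvlt z' _ hz'pos).mp h2
      rw [abs_lt]; constructor <;> linarith
  have hψinv_deriv : ∀ z, 0 < z → HasDerivAt ψinv (ψd (ψinv z))⁻¹ z := by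
    intro z hz
    apply HasDerivAt.of_local_left_inverse (hψinv_cont z hz) (hψd (ψinv z)) (hψdpos _).ne'
    filter_upwards [isOpen_Ioi.mem_nhds hz] with y hy
    exact hinv_right y hy
  -- ## hhat analysis
  set A : ℝ := (Real.exp bstar - c_s) / F bstar with hAdef
  have hAF : A * F bstar = Real.exp bstar - c_s :=
    div_mul_cancel₀ _ (hFpos bstar).ne'
  have hderivFb : deriv F bstar = Fd bstar := (hFd bstar).deriv
  have hAFd : A * Fd bstar = Real.exp bstar := by
    have hb' : Real.exp bstar * F bstar = (Real.exp bstar - c_s) * Fd bstar := by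
      rw [← hderivFb]; exact hb
    rw [hAdef, div_mul_eq_mul_div, eq_comm, eq_div_iff (hFpos bstar).ne']
    linarith
  set φ1 : ℝ → ℝ := fun x => A * F x - Real.exp x - c_b with hφ1def
  have hφ1d : ∀ x, HasDerivAt φ1 (A * Fd x - Real.exp x) x := by
    intro x
    exact (((hFd x).const_mul A).sub (Real.hasDerivAt_exp x)).sub_const c_b
  have hhat_lt : ∀ x, x ≤ bstar → hhat x = φ1 x := by
    intro x hx
    rcases lt_or_eq_of_le hx with h | h
    · rw [hhat_def, hV1 x h, hφ1def, hAdef]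
    · subst h
      have hφ1x : φ1 x = A * F x - Real.exp x - c_b := rfl
      rw [hhat_def, hV2 x le_rfl, hφ1x]
      linarith [hAF]
  have hhat_ge : ∀ x, bstar ≤ x → hhat x = -(c_s + c_b) := by
    intro x hx
    rw [hhat_def, hV2 x hx]; ring
  have hhat_diff : ∀ x, DifferentiableAt ℝ hhat x := by
    intro x
    rcases lt_trichotomy x bstar with h | h | h
    · have hev : hhat =ᶠ[nhds x] φ1 := by
        filter_upwards [isOpen_Iio.mem_nhds h] with y hy
        exact hhat_lt y (le_of_lt hy)
      rw [hev.differentiableAt_iff]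
      exact (hφ1d x).differentiableAt
    · subst h
      have hL : HasDerivWithinAt hhat 0 (Iic x) x := by
        have h0 : HasDerivWithinAt φ1 (A * Fd x - Real.exp x) (Iic x) x :=
          (hφ1d x).hasDerivWithinAt
        have h1 : A * Fd x - Real.exp x = 0 := by rw [hAFd]; ring
        rw [h1] at h0
        exact h0.congr (fun y hy => hhat_lt y hy) (hhat_lt x le_rfl)
      have hR : HasDerivWithinAt hhat 0 (Ici x) x := by
        have h0 : HasDerivWithinAt (fun _ : ℝ => -(c_s + c_b)) 0 (Ici x) x :=
          (hasDerivAt_const x _).hasDerivWithinAt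
        exact h0.congr (fun y hy => hhat_ge y hy) (hhat_ge x le_rfl)
      have := hL.union hR
      rw [Iic_union_Ici] at this
      rw [hasDerivWithinAt_univ] at this
      exact this.differentiableAt
    · have hev : hhat =ᶠ[nhds x] fun _ => -(c_s + c_b) := by
        filter_upwards [isOpen_Ioi.mem_nhds h] with y hy
        exact hhat_ge y (le_of_lt hy)
      rw [hev.differentiableAt_iff]
      exact differentiableAt_const _
  -- ## strict anti on Ici (ψ bstar)
  have hGanti : StrictAnti G := by
    intro x y hxy
    rw [hGJ, hGJ]
    exact J_strictMono hs (by nlinarith)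
  have hHformula_ge : ∀ z, ψ bstar ≤ z → Hhat z = -(c_s + c_b) / G (ψinv z) := by
    intro z hzb
    have hz : 0 < z := lt_of_lt_of_le (hψpos bstar) hzb
    rw [hHhat z hz, hhat_ge _ ((hinvle z bstar hz).mp hzb)]
  have part5 : StrictAntiOn Hhat (Ici (ψ bstar)) := by
    intro z1 h1 z2 h2 h12
    have hz1 : 0 < z1 := lt_of_lt_of_le (hψpos bstar) h1
    have hz2 : 0 < z2 := lt_of_lt_of_le (hψpos bstar) h2
    rw [hHformula_ge z1 h1, hHformula_ge z2 h2]
    have hx12 : ψinv z1 < ψinv z2 := by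
      apply (hinvlt' z2 (ψinv z1) hz2).mp
      rw [hinv_right z1 hz1]; exact h12
    have hg1 : 0 < G (ψinv z1) := hGpos _
    have hg2 : 0 < G (ψinv z2) := hGpos _
    have hgg : G (ψinv z2) < G (ψinv z1) := hGanti hx12
    rw [div_lt_div_iff₀ hg2 hg1]
    nlinarith
  -- ## limits
  have hinner_bot : Tendsto (fun x : ℝ => k * (x - θ)) atBot atBot := by
    apply Tendsto.const_mul_atBot hk
    simpa [sub_eq_add_neg] using tendsto_atBot_add_const_right atBot (-θ) tendsto_id
  have hinner_top : Tendsto (fun x : ℝ => k * (θ - x)) atBot atTop := by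
    apply Tendsto.const_mul_atTop hk
    exact (tendsto_atTop_add_const_left atBot θ
      (tendsto_neg_atBot_atTop (G := ℝ))).congr fun x => (sub_eq_add_neg θ x).symm
  have hF_bot : Tendsto F atBot (nhds 0) := by
    rw [hFfun]; exact (J_tendsto_atBot hs).comp hinner_bot
  have hG_top : Tendsto G atBot atTop := by
    rw [hGfun]; exact (J_tendsto_atTop hs).comp hinner_top
  have hhat_bot : Tendsto hhat atBot (nhds (-c_b)) := by
    have h1 : Tendsto φ1 atBot (nhds (A * 0 - 0 - c_b)) :=
      ((hF_bot.const_mul A).sub Real.tendsto_exp_atBot).sub tendsto_const_nhds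
    have h2 : A * 0 - 0 - c_b = -c_b := by ring
    rw [h2] at h1
    have hev : φ1 =ᶠ[atBot] hhat := by
      filter_upwards [eventually_le_atBot bstar] with x hx
      exact (hhat_lt x hx).symm
    exact Tendsto.congr' hev h1
  have hψinv_bot : Tendsto ψinv (nhdsWithin 0 (Ioi 0)) atBot := by
    rw [tendsto_atBot]
    intro M
    have hmem : Iio (ψ M) ∈ nhdsWithin (0:ℝ) (Ioi 0) :=
      nhdsWithin_le_nhds (Iio_mem_nhds (hψpos M))
    filter_upwards [hmem, self_mem_nhdsWithin] with z h1 h2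
    exact ((hinvlt z M h2).mp h1).le
  have h0tendsto : Tendsto Hhat (nhdsWithin 0 (Ioi 0)) (nhds 0) := by
    have hev : (fun z => hhat (ψinv z) * (G (ψinv z))⁻¹) =ᶠ[nhdsWithin (0:ℝ) (Ioi 0)] Hhat := by
      filter_upwards [self_mem_nhdsWithin] with z hz
      rw [hHhat z hz, div_eq_mul_inv]
    have hGinv : Tendsto (fun z => (G (ψinv z))⁻¹) (nhdsWithin (0:ℝ) (Ioi 0)) (nhds 0) :=
      tendsto_inv_atTop_zero.comp (hG_top.comp hψinv_bot)
    have hmul : Tendsto (fun z => hhat (ψinv z) * (G (ψinv z))⁻¹)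
        (nhdsWithin (0:ℝ) (Ioi 0)) (nhds (-c_b * 0)) :=
      (hhat_bot.comp hψinv_bot).mul hGinv
    rw [mul_zero] at hmul
    exact Tendsto.congr' hev hmul
  -- ## part 2 : differentiability on (0, ∞)
  have part2 : ∀ z : ℝ, 0 < z → DifferentiableAt ℝ Hhat z := by
    intro z hz
    have hev : Hhat =ᶠ[nhds z] fun w => hhat (ψinv w) / G (ψinv w) := by
      filter_upwards [isOpen_Ioi.mem_nhds hz] with w hw
      exact hHhat w hw
    rw [hev.differentiableAt_iff]
    have hinvdiff := (hψinv_deriv z hz).differentiableAt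
    exact ((hhat_diff (ψinv z)).comp z hinvdiff).div
      ((hGd (ψinv z)).differentiableAt.comp z hinvdiff) (hGne (ψinv z))
  -- ## part 1 : continuity on [0, ∞)
  have part1 : ContinuousOn Hhat (Ici (0:ℝ)) := by
    intro z hz
    rcases eq_or_lt_of_le (mem_Ici.mp hz) with h | h
    · subst h
      show Tendsto Hhat (nhdsWithin 0 (Ici (0:ℝ))) (nhds (Hhat 0))
      rw [hHhat0, ← Ioi_union_left, nhdsWithin_union, tendsto_sup]
      refine ⟨h0tendsto, ?_⟩
      rw [nhdsWithin_singleton]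
      simpa [hHhat0] using tendsto_pure_nhds Hhat 0
    · exact (part2 z h).continuousAt.continuousWithinAt
  -- ## part 3 : second differentiability off ψ bstar
  set g1d : ℝ → ℝ := fun x =>
      ((A * Fd x - Real.exp x) * G x - φ1 x * Gd x) / (G x) ^ 2 with hg1ddef
  have h_g1 : ∀ x, HasDerivAt (fun x => φ1 x / G x) (g1d x) x := by
    intro x
    exact (hφ1d x).div (hGd x) (hGne x)
  have hg1d_diff : ∀ x, DifferentiableAt ℝ g1d x := by
    intro x
    apply DifferentiableAt.div
    · apply DifferentiableAt.sub
      · exact (((hFd_diff x).const_mul A).sub Real.differentiable_exp.differentiableAt).mul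
          (hGd x).differentiableAt
      · exact (hφ1d x).differentiableAt.mul (hGd_diff x)
    · exact (hGd x).differentiableAt.pow 2
    · exact pow_ne_zero 2 (hGne x)
  set g2d : ℝ → ℝ := fun x =>
      (0 * G x - (-(c_s + c_b)) * Gd x) / (G x) ^ 2 with hg2ddef
  have h_g2 : ∀ x, HasDerivAt (fun x => -(c_s + c_b) / G x) (g2d x) x := by
    intro x
    exact (hasDerivAt_const x _).div (hGd x) (hGne x)
  have hg2d_diff : ∀ x, DifferentiableAt ℝ g2d x := by
    intro x
    apply DifferentiableAt.div
    · exact ((differentiableAt_const _).mul (hGd x).differentiableAt).sub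
        ((differentiableAt_const _).mul (hGd_diff x))
    · exact (hGd x).differentiableAt.pow 2
    · exact pow_ne_zero 2 (hGne x)
  have hK1 : ∀ z, 0 < z → HasDerivAt (fun w => φ1 (ψinv w) / G (ψinv w))
      (g1d (ψinv z) * (ψd (ψinv z))⁻¹) z := by
    intro z hz
    have := (h_g1 (ψinv z)).comp z (hψinv_deriv z hz)
    simpa [Function.comp_def] using this
  have hK2 : ∀ z, 0 < z → HasDerivAt (fun w => -(c_s + c_b) / G (ψinv w))
      (g2d (ψinv z) * (ψd (ψinv z))⁻¹) z := by
    intro z hz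
    have := (h_g2 (ψinv z)).comp z (hψinv_deriv z hz)
    simpa [Function.comp_def] using this
  have part3 : ∀ z : ℝ, 0 < z → z ≠ ψ bstar → DifferentiableAt ℝ (deriv Hhat) z := by
    intro z hz hne
    have hinvdiff := (hψinv_deriv z hz).differentiableAt
    rcases hne.lt_or_gt with hlt | hgt
    · have hnb := isOpen_Ioo.mem_nhds (⟨hz, hlt⟩ : z ∈ Ioo (0:ℝ) (ψ bstar))
      have hevH : Hhat =ᶠ[nhds z] fun w => φ1 (ψinv w) / G (ψinv w) := by
        filter_upwards [hnb] with w hw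
        rw [hHhat w hw.1, hhat_lt _ ((hinvlt w bstar hw.1).mp hw.2).le]
      have hev3 : deriv (fun w => φ1 (ψinv w) / G (ψinv w)) =ᶠ[nhds z]
          fun w => g1d (ψinv w) * (ψd (ψinv w))⁻¹ := by
        filter_upwards [isOpen_Ioi.mem_nhds hz] with w hw
        exact (hK1 w hw).deriv
      rw [(hevH.deriv.trans hev3).differentiableAt_iff]
      exact ((hg1d_diff (ψinv z)).comp z hinvdiff).mul
        (((hψd_diff (ψinv z)).comp z hinvdiff).inv (hψdpos (ψinv z)).ne')
    · have hnb := isOpen_Ioi.mem_nhds (mem_Ioi.mpr hgt)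
      have hevH : Hhat =ᶠ[nhds z] fun w => -(c_s + c_b) / G (ψinv w) := by
        filter_upwards [hnb] with w hw
        have hw0 : (0:ℝ) < w := lt_trans (hψpos bstar) hw
        rw [hHhat w hw0, hhat_ge _ ((hinvle w bstar hw0).mp (le_of_lt hw))]
      have hev3 : deriv (fun w => -(c_s + c_b) / G (ψinv w)) =ᶠ[nhds z]
          fun w => g2d (ψinv w) * (ψd (ψinv w))⁻¹ := by
        filter_upwards [isOpen_Ioi.mem_nhds hz] with w hw
        exact (hK2 w hw).deriv
      rw [(hevH.deriv.trans hev3).differentiableAt_iff]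
      exact ((hg2d_diff (ψinv z)).comp z hinvdiff).mul
        (((hψd_diff (ψinv z)).comp z hinvdiff).inv (hψdpos (ψinv z)).ne')
  -- ## part 6
  have part6 : (∃ x, 0 < hhat x) →
      ∃ bb : ℝ, bb < bstar ∧
        ∀ z : ℝ, ((0 < z ∧ z < ψ bb) ∨ ψ bstar ≤ z) → Hhat z < 0 := by
    intro _
    have hIio : Iio (0:ℝ) ∈ nhds (-c_b) := Iio_mem_nhds (by linarith)
    have hev := hhat_bot hIio
    rw [mem_map, mem_atBot_sets] at hev
    obtain ⟨M, hM⟩ := hev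
    refine ⟨min M (bstar - 1), lt_of_le_of_lt (min_le_right _ _) (by linarith), ?_⟩
    intro z hzc
    rcases hzc with ⟨hz0, hzlt⟩ | hge
    · rw [hHhat z hz0]
      apply div_neg_of_neg_of_pos _ (hGpos _)
      have h1 : ψinv z < min M (bstar - 1) := (hinvlt z _ hz0).mp hzlt
      exact hM _ (le_trans h1.le (min_le_left _ _))
    · rw [hHformula_ge z hge]
      exact div_neg_of_neg_of_pos (by linarith) (hGpos _)
  exact ⟨part1, part2, part3, hHhat0, part5, part6⟩
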